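/- Let M be a topological space with a Borel measure μ and let Ω : M × M → ℂ be continuous and satisfy propagator conditions (1), (3) and (4). Let Ψ : M → ℂ be continuous. Then for every x ∈ M the function y ↦ Ψ(x)Ω(x,y) lies in L²(M, μ), and the map M → L²(M, μ), x ↦ (y ↦ Ψ(x)Ω(x,y)), is continuous; moreover for all x, x' ∈ M one has ∫_M |Ψ(x)Ω(x,y) − Ψ(x')Ω(x',y)|² dμ(y) = |Ψ(x)|² + |Ψ(x')|² − conj(Ψ(x))Ψ(x')Ω(x',x) − conj(Ψ(x'))Ψ(x)Ω(x,x'). -/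

import Mathlib

open MeasureTheory Filter Topology

/-- For a continuous propagator `Ω` (conditions (1), (3), (4)) on a
topological space with a Borel measure, and a continuous `Ψ : M → ℂ`, the coherent
states `y ↦ Ψ(x)Ω(x,y)` lie in `L²(M,μ)`, the map `x ↦ Ψ(x)Ω(x,·)` is continuous
into `L²(M,μ)`, and one has the explicit formula
`∫ |Ψ(x)Ω(x,y) − Ψ(x')Ω(x',y)|² dμ(y)
  = |Ψ(x)|² + |Ψ(x')|² − conj(Ψ x)Ψ(x')Ω(x',x) − conj(Ψ x')Ψ(x)Ω(x,x')`. -/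
theorem coherent_state_map_continuous
    {M : Type*} [TopologicalSpace M] [MeasurableSpace M] [BorelSpace M]
    (μ : Measure M)
    (Ω : M → M → ℂ)
    (hΩcont : Continuous fun p : M × M => Ω p.1 p.2)
    (h1 : ∀ x, Ω x x = 1)
    (h3 : ∀ x y, Ω x y = (starRingEnd ℂ) (Ω y x))
    (h4int : ∀ x y, Integrable (fun z => Ω x z * Ω z y) μ)
    (h4 : ∀ x y, ∫ z, Ω x z * Ω z y ∂μ = Ω x y)
    (Ψ : M → ℂ) (hΨ : Continuous Ψ) :
    ∃ hmem : ∀ x, MemLp (fun y => Ψ x * Ω x y) 2 μ,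
      Continuous (fun x => (hmem x).toLp) ∧
      ∀ x x' : M,
        ((∫ y, ‖Ψ x * Ω x y - Ψ x' * Ω x' y‖ ^ 2 ∂μ : ℝ) : ℂ) =
          (‖Ψ x‖ : ℂ) ^ 2 + (‖Ψ x'‖ : ℂ) ^ 2
            - (starRingEnd ℂ) (Ψ x) * Ψ x' * Ω x' x
            - (starRingEnd ℂ) (Ψ x') * Ψ x * Ω x x' := by
  have hΩx : ∀ x : M, Continuous fun y => Ω x y := fun x =>
    hΩcont.comp (continuous_const.prodMk continuous_id)
  have hsq : ∀ x y : M, Ω x y * Ω y x = ((‖Ω x y‖ ^ 2 : ℝ) : ℂ) := by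
    intro x y
    rw [h3 y x, Complex.mul_conj]
    simp [Complex.normSq_eq_norm_sq]
  have hΩmem : ∀ x : M, MemLp (fun y => Ω x y) 2 μ := by
    intro x
    rw [memLp_two_iff_integrable_sq_norm (hΩx x).aestronglyMeasurable]
    have h := (h4int x x).re
    have h2 : (fun z => Complex.re (Ω x z * Ω z x)) = fun z => ‖Ω x z‖ ^ 2 := by
      funext z; rw [hsq x z]; exact Complex.ofReal_re _
    rwa [show (fun z => RCLike.re (Ω x z * Ω z x)) = fun z => ‖Ω x z‖ ^ 2 from h2] at h
  have hmem : ∀ x, MemLp (fun y => Ψ x * Ω x y) 2 μ := fun x => (hΩmem x).const_mul (Ψ x)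
  -- the key integral identity
  have key : ∀ x x' : M,
      ((∫ y, ‖Ψ x * Ω x y - Ψ x' * Ω x' y‖ ^ 2 ∂μ : ℝ) : ℂ) =
        (‖Ψ x‖ : ℂ) ^ 2 + (‖Ψ x'‖ : ℂ) ^ 2
          - (starRingEnd ℂ) (Ψ x) * Ψ x' * Ω x' x
          - (starRingEnd ℂ) (Ψ x') * Ψ x * Ω x x' := by
    intro x x'
    have hexp : ∀ y : M, ((‖Ψ x * Ω x y - Ψ x' * Ω x' y‖ ^ 2 : ℝ) : ℂ)
        = Ψ x * (starRingEnd ℂ) (Ψ x) * (Ω x y * Ω y x)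
          + Ψ x' * (starRingEnd ℂ) (Ψ x') * (Ω x' y * Ω y x')
          - (starRingEnd ℂ) (Ψ x) * Ψ x' * (Ω x' y * Ω y x)
          - (starRingEnd ℂ) (Ψ x') * Ψ x * (Ω x y * Ω y x') := by
      intro y
      have hc : ((‖Ψ x * Ω x y - Ψ x' * Ω x' y‖ ^ 2 : ℝ) : ℂ)
          = (Ψ x * Ω x y - Ψ x' * Ω x' y) *
              (starRingEnd ℂ) (Ψ x * Ω x y - Ψ x' * Ω x' y) := by
        rw [Complex.mul_conj]
        simp [Complex.normSq_eq_norm_sq]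
      rw [hc, h3 y x, h3 y x']
      simp only [map_sub, map_mul]
      ring
    have i1 : Integrable (fun y => Ψ x * (starRingEnd ℂ) (Ψ x) * (Ω x y * Ω y x)) μ :=
      (h4int x x).const_mul _
    have i2 : Integrable (fun y => Ψ x' * (starRingEnd ℂ) (Ψ x') * (Ω x' y * Ω y x')) μ :=
      (h4int x' x').const_mul _
    have i3 : Integrable (fun y => (starRingEnd ℂ) (Ψ x) * Ψ x' * (Ω x' y * Ω y x)) μ :=
      (h4int x' x).const_mul _
    have i4 : Integrable (fun y => (starRingEnd ℂ) (Ψ x') * Ψ x * (Ω x y * Ω y x')) μ :=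
      (h4int x x').const_mul _
    have ofRealInt : ((∫ y, ‖Ψ x * Ω x y - Ψ x' * Ω x' y‖ ^ 2 ∂μ : ℝ) : ℂ)
        = ∫ y, ((‖Ψ x * Ω x y - Ψ x' * Ω x' y‖ ^ 2 : ℝ) : ℂ) ∂μ := by
      rw [← Complex.coe_algebraMap, RCLike.algebraMap_eq_ofReal, ← integral_ofReal]
    have i12 : Integrable (fun y => Ψ x * (starRingEnd ℂ) (Ψ x) * (Ω x y * Ω y x)
        + Ψ x' * (starRingEnd ℂ) (Ψ x') * (Ω x' y * Ω y x')) μ := i1.add i2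
    have i123 : Integrable (fun y => Ψ x * (starRingEnd ℂ) (Ψ x) * (Ω x y * Ω y x)
        + Ψ x' * (starRingEnd ℂ) (Ψ x') * (Ω x' y * Ω y x')
        - (starRingEnd ℂ) (Ψ x) * Ψ x' * (Ω x' y * Ω y x)) μ := i12.sub i3
    rw [ofRealInt]
    simp_rw [hexp]
    rw [integral_sub i123 i4, integral_sub i12 i3, integral_add i1 i2,
      integral_const_mul, integral_const_mul, integral_const_mul, integral_const_mul,
      h4, h4, h4, h4, h1, h1, mul_one, mul_one, Complex.mul_conj, Complex.mul_conj]
    simp [Complex.normSq_eq_norm_sq]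
  refine ⟨hmem, ?_, key⟩
  -- norm-squared identity in L²
  have hnormsq : ∀ x x' : M, (‖(hmem x).toLp - (hmem x').toLp‖ ^ 2 : ℝ)
      = ∫ y, ‖Ψ x * Ω x y - Ψ x' * Ω x' y‖ ^ 2 ∂μ := by
    intro x x'
    rw [← MemLp.toLp_sub]
    set hsub := (hmem x).sub (hmem x') with hsubdef
    have hcoe : (hsub.toLp _) =ᵐ[μ]
        ((fun y => Ψ x * Ω x y) - fun y => Ψ x' * Ω x' y) := hsub.coeFn_toLp
    have h2' : (inner ℂ (hsub.toLp _) (hsub.toLp _) : ℂ)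
        = ∫ y, ((‖Ψ x * Ω x y - Ψ x' * Ω x' y‖ ^ 2 : ℝ) : ℂ) ∂μ := by
      rw [MeasureTheory.L2.inner_def]
      refine integral_congr_ae ?_
      filter_upwards [hcoe] with y hy
      rw [hy]
      rw [show ((fun y => Ψ x * Ω x y) - fun y => Ψ x' * Ω x' y) y
          = Ψ x * Ω x y - Ψ x' * Ω x' y from rfl]
      rw [inner_self_eq_norm_sq_to_K, Complex.ofReal_pow, ← Complex.coe_algebraMap,
        RCLike.algebraMap_eq_ofReal]
    have h3' : ((‖hsub.toLp _‖ ^ 2 : ℝ) : ℂ) = (inner ℂ (hsub.toLp _) (hsub.toLp _) : ℂ) := by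
      rw [Complex.ofReal_pow, ← Complex.coe_algebraMap, RCLike.algebraMap_eq_ofReal,
        ← inner_self_eq_norm_sq_to_K (𝕜 := ℂ)]
    have ofRealInt : ((∫ y, ‖Ψ x * Ω x y - Ψ x' * Ω x' y‖ ^ 2 ∂μ : ℝ) : ℂ)
        = ∫ y, ((‖Ψ x * Ω x y - Ψ x' * Ω x' y‖ ^ 2 : ℝ) : ℂ) ∂μ := by
      rw [← Complex.coe_algebraMap, RCLike.algebraMap_eq_ofReal, ← integral_ofReal]
    have h1' := h3'.trans (h2'.trans ofRealInt.symm)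
    exact_mod_cast h1'
  -- continuity
  set R : M × M → ℝ := fun p => ∫ y, ‖Ψ p.1 * Ω p.1 y - Ψ p.2 * Ω p.2 y‖ ^ 2 ∂μ with hRdef
  have hRG : R = fun p : M × M => ((‖Ψ p.1‖ : ℂ) ^ 2 + (‖Ψ p.2‖ : ℂ) ^ 2
      - (starRingEnd ℂ) (Ψ p.1) * Ψ p.2 * Ω p.2 p.1
      - (starRingEnd ℂ) (Ψ p.2) * Ψ p.1 * Ω p.1 p.2).re := by
    funext p
    rw [hRdef]
    rw [← key p.1 p.2, Complex.ofReal_re]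
  have hRcont : Continuous R := by
    rw [hRG]
    apply Complex.continuous_re.comp
    apply Continuous.sub
    apply Continuous.sub
    apply Continuous.add
    · exact (Complex.continuous_ofReal.comp (hΨ.norm.comp continuous_fst)).pow 2
    · exact (Complex.continuous_ofReal.comp (hΨ.norm.comp continuous_snd)).pow 2
    · exact ((Complex.continuous_conj.comp (hΨ.comp continuous_fst)).mul
        (hΨ.comp continuous_snd)).mul (hΩcont.comp continuous_swap)
    · exact ((Complex.continuous_conj.comp (hΨ.comp continuous_snd)).mul
        (hΨ.comp continuous_fst)).mul hΩcont
  have hR0 : ∀ x : M, R (x, x) = 0 := by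
    intro x; rw [hRdef]; simp
  refine continuous_iff_continuousAt.2 fun x₀ => ?_
  rw [ContinuousAt, tendsto_iff_dist_tendsto_zero]
  have hdist : ∀ x : M, dist ((hmem x).toLp) ((hmem x₀).toLp) = Real.sqrt (R (x, x₀)) := by
    intro x
    rw [dist_eq_norm, show R (x, x₀) = ‖(hmem x).toLp - (hmem x₀).toLp‖ ^ 2 from
      (hnormsq x x₀).symm, Real.sqrt_sq (norm_nonneg _)]
  simp only [hdist]
  have ht : Tendsto (fun x => Real.sqrt (R (x, x₀))) (𝓝 x₀) (𝓝 (Real.sqrt (R (x₀, x₀)))) :=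
    (Real.continuous_sqrt.comp (hRcont.comp (continuous_id.prodMk continuous_const))).tendsto x₀
  rwa [hR0 x₀, Real.sqrt_zero] at ht
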